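/- Monotonicity of the second moment of the offloading time E{T_n²} (part of Lemma 1). The function G ↦ e^{λG} · ∫_G^∞ (D/(B·ln(1 + c·g)))² · λ e^{−λg} dg is antitone (monotonically nonincreasing) on (0, ∞). -/

import Mathlib

open MeasureTheory Set

private lemma f_anti (c D B : ℝ) (hc : 0 < c) (hD : 0 < D) (hB : 0 < B)
    {a b : ℝ} (ha : 0 < a) (hab : a ≤ b) :
    (D / (B * Real.log (1 + c * b)))^2 ≤ (D / (B * Real.log (1 + c * a)))^2 := by
  have hla : 0 < Real.log (1 + c * a) := Real.log_pos (by nlinarith)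
  have hlb : Real.log (1 + c * a) ≤ Real.log (1 + c * b) :=
    Real.log_le_log (by nlinarith) (by nlinarith)
  have h1 : D / (B * Real.log (1 + c * b)) ≤ D / (B * Real.log (1 + c * a)) :=
    div_le_div_of_nonneg_left hD.le (mul_pos hB hla) (by nlinarith)
  have h0 : 0 ≤ D / (B * Real.log (1 + c * b)) := div_nonneg hD.le (by nlinarith)
  exact pow_le_pow_left₀ h0 h1 2

private lemma shift_eq (lam c D B : ℝ) {G : ℝ} (hG : 0 < G) :
    Real.exp (lam * G) *
      ∫ g in Set.Ioi G, (D / (B * Real.log (1 + c * g)))^2 * (lam * Real.exp (-lam * g)) =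
    ∫ x in Set.Ioi (0:ℝ),
      (D / (B * Real.log (1 + c * (x + G))))^2 * (lam * Real.exp (-lam * x)) := by
  set h : ℝ → ℝ := fun g => (D / (B * Real.log (1 + c * g)))^2 * (lam * Real.exp (-lam * g))
    with hdef
  have h1 : (∫ g in Set.Ioi G, h g) = ∫ x in Set.Ioi (0:ℝ), h (x + G) := by
    rw [← integral_indicator measurableSet_Ioi, ← integral_indicator measurableSet_Ioi]
    rw [← integral_add_right_eq_self (Set.indicator (Set.Ioi G) h) G]
    congr 1
    funext x
    by_cases hx : x ∈ Set.Ioi (0:ℝ)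
    · rw [Set.indicator_of_mem hx, Set.indicator_of_mem (by simp at hx ⊢; linarith)]
    · rw [Set.indicator_of_notMem hx, Set.indicator_of_notMem (by simp at hx ⊢; linarith)]
  rw [h1, ← integral_const_mul]
  congr 1
  funext x
  simp only [hdef]
  have hexp : Real.exp (lam * G) * Real.exp (-lam * (x + G)) = Real.exp (-lam * x) := by
    rw [← Real.exp_add]; congr 1; ring
  calc Real.exp (lam * G) *
        ((D / (B * Real.log (1 + c * (x + G))))^2 * (lam * Real.exp (-lam * (x + G))))
      = (D / (B * Real.log (1 + c * (x + G))))^2 *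
        (lam * (Real.exp (lam * G) * Real.exp (-lam * (x + G)))) := by ring
    _ = (D / (B * Real.log (1 + c * (x + G))))^2 * (lam * Real.exp (-lam * x)) := by
        rw [hexp]

private lemma integrable_shift (lam c D B : ℝ)
    (hlam : 0 < lam) (hc : 0 < c) (hD : 0 < D) (hB : 0 < B) {G : ℝ} (hG : 0 < G) :
    IntegrableOn
      (fun x => (D / (B * Real.log (1 + c * (x + G))))^2 * (lam * Real.exp (-lam * x)))
      (Set.Ioi (0:ℝ)) := by
  set C : ℝ := (D / (B * Real.log (1 + c * G)))^2
  have hmeas : AEStronglyMeasurable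
      (fun x => (D / (B * Real.log (1 + c * (x + G))))^2 * (lam * Real.exp (-lam * x)))
      (volume.restrict (Set.Ioi (0:ℝ))) := by
    apply Measurable.aestronglyMeasurable
    have m1 : Measurable fun x : ℝ => Real.log (1 + c * (x + G)) :=
      Real.measurable_log.comp (by fun_prop)
    exact ((measurable_const.div (measurable_const.mul m1)).pow_const 2).mul (by fun_prop)
  have hint : IntegrableOn (fun x => C * lam * Real.exp (-lam * x)) (Set.Ioi (0:ℝ)) := by
    simpa [mul_assoc, IntegrableOn] using (exp_neg_integrableOn_Ioi 0 hlam).const_mul (C * lam)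
  refine hint.mono' hmeas ?_
  filter_upwards [ae_restrict_mem measurableSet_Ioi] with x hx
  simp only [Set.mem_Ioi] at hx
  have hf : (D / (B * Real.log (1 + c * (x + G))))^2 ≤ C :=
    f_anti c D B hc hD hB hG (by linarith)
  have h0 : (0:ℝ) ≤ (D / (B * Real.log (1 + c * (x + G))))^2 := by positivity
  rw [Real.norm_eq_abs, abs_of_nonneg (by positivity)]
  calc (D / (B * Real.log (1 + c * (x + G))))^2 * (lam * Real.exp (-lam * x))
      ≤ C * (lam * Real.exp (-lam * x)) :=
        mul_le_mul_of_nonneg_right hf (by positivity)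
    _ = C * lam * Real.exp (-lam * x) := by ring

/-- Monotonicity of the second moment of the offloading time `E{T_n²}` (part of Lemma 1):
`G ↦ e^{λG} · ∫_G^∞ (D/(B·ln(1+c·g)))² · λ e^{−λg} dg` is antitone on `(0, ∞)`. -/
theorem offloading_time_second_moment_antitone (lam c D B : ℝ)
    (hlam : 0 < lam) (hc : 0 < c) (hD : 0 < D) (hB : 0 < B) :
    AntitoneOn
      (fun G : ℝ => Real.exp (lam * G) *
        ∫ g in Set.Ioi G, (D / (B * Real.log (1 + c * g)))^2 * (lam * Real.exp (-lam * g)))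
      (Set.Ioi 0) := by
  intro G1 hG1 G2 hG2 h12
  simp only [Set.mem_Ioi] at hG1 hG2
  dsimp only
  rw [shift_eq lam c D B hG1, shift_eq lam c D B hG2]
  apply setIntegral_mono_on (integrable_shift lam c D B hlam hc hD hB hG2)
    (integrable_shift lam c D B hlam hc hD hB hG1) measurableSet_Ioi
  intro x hx
  simp only [Set.mem_Ioi] at hx
  apply mul_le_mul_of_nonneg_right _ (by positivity)
  exact f_anti c D B hc hD hB (by linarith) (by linarith)
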